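/- arXiv:0808.0643 — 2 statements merged into one kernel-verified Lean document; each statement's English description precedes it below -/
import Mathlib

section
/- Let α, β, γ ≥ 0 be real numbers and define H(x,s) = s^α (1+s)^{-β} (1+|x|)^{-γ} for x ∈ ℝ^d, s > 0. Fix a > 0 and b > 1. Then there is a constant C > 0 (depending only on a, b, α, β, γ, d) such that for all x ∈ ℝ^d, s > 0, and all y ∈ ℝ^d with |y| ≤ a and all r ∈ [1/b, b], one has H( -(x+s·y)/(s·r), 1/(s·r) ) ≤ C · s^{β-α} (1+s)^{-β} (1+|x|/s)^{-γ}. Equivalently, the right local maximum function of H over the neighborhood U = B(0,a) × [1/b, b] of the identity of the affine group satisfies sup_{(y,r)∈U} |H((y,r)^{-1}(x,s)^{-1})| ≤ C · s^{β-α} (1+s)^{-β} (1+|x|/s)^{-γ}. -/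
/-- The envelope function `H(x,s) = s^α (1+s)^{-β} (1+|x|)^{-γ}` on the affine group. -/
noncomputable def affEnvelope {d : ℕ} (α β γ : ℝ)
    (x : EuclideanSpace ℝ (Fin d)) (s : ℝ) : ℝ :=
  s ^ α * (1 + s) ^ (-β) * (1 + ‖x‖) ^ (-γ)

/-- estimate of the right local maximum function of the envelope `H` over the
neighborhood `U = B(0,a) × [1/b, b]` of the identity of the affine group:
`H((y,r)⁻¹ (x,s)⁻¹) = H(-(x+s·y)/(s·r), 1/(s·r)) ≤ C s^{β-α} (1+s)^{-β} (1+|x|/s)^{-γ}`. -/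
theorem affEnvelope_right_local_max_bound (d : ℕ) (α β γ : ℝ)
    (hα : 0 ≤ α) (hβ : 0 ≤ β) (hγ : 0 ≤ γ) (a b : ℝ) (ha : 0 < a) (hb : 1 < b) :
    ∃ C : ℝ, 0 < C ∧
      ∀ (x y : EuclideanSpace ℝ (Fin d)) (s r : ℝ), 0 < s →
        ‖y‖ ≤ a → r ∈ Set.Icc (1 / b) b →
        affEnvelope α β γ (-((s * r)⁻¹ • (x + s • y))) ((s * r)⁻¹) ≤
          C * s ^ (β - α) * (1 + s) ^ (-β) * (1 + ‖x‖ / s) ^ (-γ) := by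
  have hb0 : (0:ℝ) < b := lt_trans one_pos hb
  refine ⟨b ^ α * b ^ β * (1 + a + b) ^ γ, by positivity, ?_⟩
  intro x y s r hs hy hr
  obtain ⟨hr1, hr2⟩ := hr
  have hr0 : 0 < r := lt_of_lt_of_le (by positivity) hr1
  have hsr : 0 < s * r := mul_pos hs hr0
  set t : ℝ := (s * r)⁻¹ with ht
  have ht0 : 0 < t := inv_pos.mpr hsr
  set N : ℝ := ‖x + s • y‖ with hN
  have hN0 : 0 ≤ N := norm_nonneg _
  have hnorm : ‖(-(t • (x + s • y)))‖ = t * N := by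
    rw [norm_neg, norm_smul, Real.norm_eq_abs, abs_of_pos ht0]
  unfold affEnvelope
  rw [hnorm]
  have hrinv : r⁻¹ ≤ b := by
    rw [inv_le_comm₀ hr0 hb0]
    rwa [one_div] at hr1
  -- bound 1
  have h1 : t ^ α ≤ b ^ α * s ^ (-α) := by
    have hle : t ≤ b * s⁻¹ := by
      rw [ht, mul_inv, mul_comm]
      exact mul_le_mul_of_nonneg_right hrinv (by positivity)
    calc t ^ α ≤ (b * s⁻¹) ^ α := Real.rpow_le_rpow ht0.le hle hα
      _ = b ^ α * s ^ (-α) := by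
          rw [Real.mul_rpow hb0.le (by positivity), Real.inv_rpow hs.le,
            ← Real.rpow_neg hs.le]
  -- bound 2
  have h2 : (1 + t) ^ (-β) ≤ b ^ β * (1 + s⁻¹) ^ (-β) := by
    have hkey : (1 + s⁻¹) / b ≤ 1 + t := by
      have hti : s⁻¹ * b⁻¹ ≤ t := by
        rw [ht, mul_inv]
        exact mul_le_mul_of_nonneg_left (inv_anti₀ hr0 hr2) (by positivity)
      have h1b : (1:ℝ)/b ≤ 1 := by
        rw [div_le_one hb0]; exact hb.le
      have heq : (1 + s⁻¹) / b = 1/b + s⁻¹ * b⁻¹ := by ring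
      rw [heq]
      linarith
    calc (1 + t) ^ (-β) ≤ ((1 + s⁻¹) / b) ^ (-β) :=
          Real.rpow_le_rpow_of_nonpos (by positivity) hkey (neg_nonpos.mpr hβ)
      _ = b ^ β * (1 + s⁻¹) ^ (-β) := by
          rw [Real.div_rpow (by positivity) hb0.le, Real.rpow_neg hb0.le,
            div_eq_mul_inv, inv_inv, mul_comm]
  -- bound 3
  have h3 : (1 + t * N) ^ (-γ) ≤ (1 + a + b) ^ γ * (1 + ‖x‖ / s) ^ (-γ) := by
    have hxb : ‖x‖ ≤ N + s * a := by
      have hx : x = (x + s • y) - s • y := by abel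
      calc ‖x‖ = ‖(x + s • y) - s • y‖ := by rw [← hx]
        _ ≤ N + ‖s • y‖ := norm_sub_le _ _
        _ ≤ N + s * a := by
            rw [norm_smul, Real.norm_eq_abs, abs_of_pos hs]
            gcongr
    have hNs : N / s ≤ b * (t * N) := by
      have ht' : t * N = N / s * r⁻¹ := by rw [ht, mul_inv]; ring
      rw [ht']
      have h1b : (1:ℝ) ≤ b * r⁻¹ := by
        rw [← div_eq_mul_inv, le_div_iff₀ hr0]; linarith
      calc N / s = N / s * 1 := by ring
        _ ≤ N / s * (b * r⁻¹) := mul_le_mul_of_nonneg_left h1b (by positivity)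
        _ = b * (N / s * r⁻¹) := by ring
    have hkey : 1 + ‖x‖ / s ≤ (1 + a + b) * (1 + t * N) := by
      have hx1 : ‖x‖ / s ≤ N / s + a := by
        rw [div_add' _ _ _ hs.ne']
        gcongr
        linarith
      have htN : 0 ≤ t * N := by positivity
      nlinarith [ha.le, hb0.le]
    calc (1 + t * N) ^ (-γ) ≤ ((1 + ‖x‖ / s) / (1 + a + b)) ^ (-γ) := by
          apply Real.rpow_le_rpow_of_nonpos (by positivity) _ (neg_nonpos.mpr hγ)
          rw [div_le_iff₀ (by positivity)]
          linarith [hkey]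
      _ = (1 + a + b) ^ γ * (1 + ‖x‖ / s) ^ (-γ) := by
          rw [Real.div_rpow (by positivity) (by positivity),
            Real.rpow_neg (show (0:ℝ) ≤ 1 + a + b by positivity) γ,
            div_eq_mul_inv, inv_inv, mul_comm]
  have hprod : t ^ α * (1 + t) ^ (-β) * (1 + t * N) ^ (-γ) ≤
      (b ^ α * s ^ (-α)) * (b ^ β * (1 + s⁻¹) ^ (-β)) * ((1 + a + b) ^ γ * (1 + ‖x‖ / s) ^ (-γ)) := by
    have p2 : (0:ℝ) ≤ (1 + t) ^ (-β) := by positivity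
    have p3 : (0:ℝ) ≤ (1 + t * N) ^ (-γ) := by positivity
    exact mul_le_mul (mul_le_mul h1 h2 p2 (by positivity)) h3 p3 (by positivity)
  refine hprod.trans (le_of_eq ?_)
  have heq : s ^ (-α) * (1 + s⁻¹) ^ (-β) = s ^ (β - α) * (1 + s) ^ (-β) := by
    have hss : (1 + s⁻¹ : ℝ) = (1 + s) / s := by
      rw [add_div, div_self hs.ne', one_div, add_comm]
    rw [hss, Real.div_rpow (by positivity) hs.le, sub_eq_add_neg, add_comm β (-α),
      Real.rpow_add hs, Real.rpow_neg hs.le β, div_eq_mul_inv, inv_inv]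
    ring
  calc (b ^ α * s ^ (-α)) * (b ^ β * (1 + s⁻¹) ^ (-β)) * ((1 + a + b) ^ γ * (1 + ‖x‖ / s) ^ (-γ))
      = b ^ α * b ^ β * (1 + a + b) ^ γ * (s ^ (-α) * (1 + s⁻¹) ^ (-β)) * (1 + ‖x‖ / s) ^ (-γ) := by
        ring
    _ = b ^ α * b ^ β * (1 + a + b) ^ γ * s ^ (β - α) * (1 + s) ^ (-β) * (1 + ‖x‖ / s) ^ (-γ) := by
        rw [heq]; ring
end

section
/- Let d ≥ 1, σ ∈ ℝ, and let α, β, γ ≥ 0 be real numbers satisfying γ > d, β > α + σ, and α + σ > 0. Then the integral ∫_{ℝ^d} ∫_0^∞ s^{β-α} (1+s)^{-β} (1 + |x|/s)^{-γ} · s^{-σ} · s^{-(d+1)} ds dx is finite. -/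
open MeasureTheory Set Real ENNReal

private lemma aux_integrableOn_rpow_mul (a β : ℝ) (hβ : 0 ≤ β)
    (h1 : -1 < a) (h2 : a - β < -1) :
    IntegrableOn (fun s : ℝ => s ^ a * (1 + s) ^ (-β)) (Set.Ioi 0) := by
  have hmeas : Measurable fun s : ℝ => s ^ a * (1 + s) ^ (-β) := by fun_prop
  have hIoc : IntegrableOn (fun s : ℝ => s ^ a * (1 + s) ^ (-β)) (Set.Ioc 0 1) := by
    have hi : IntegrableOn (fun s : ℝ => s ^ a) (Set.Ioc 0 1) := by
      rw [← intervalIntegrable_iff_integrableOn_Ioc_of_le zero_le_one]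
      exact intervalIntegral.intervalIntegrable_rpow' h1
    refine hi.mono' hmeas.aestronglyMeasurable ?_
    filter_upwards [ae_restrict_mem measurableSet_Ioc] with s hs
    have hs0 : (0 : ℝ) < s := hs.1
    rw [Real.norm_eq_abs, abs_mul, abs_of_nonneg (rpow_nonneg hs0.le _),
      abs_of_nonneg (rpow_nonneg (by linarith) _)]
    calc s ^ a * (1 + s) ^ (-β) ≤ s ^ a * 1 :=
          mul_le_mul_of_nonneg_left
            (rpow_le_one_of_one_le_of_nonpos (by linarith) (by linarith)) (rpow_nonneg hs0.le _)
      _ = s ^ a := mul_one _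
  have hIoi : IntegrableOn (fun s : ℝ => s ^ a * (1 + s) ^ (-β)) (Set.Ioi 1) := by
    have hi : IntegrableOn (fun s : ℝ => s ^ (a - β)) (Set.Ioi 1) :=
      integrableOn_Ioi_rpow_of_lt h2 one_pos
    refine hi.mono' hmeas.aestronglyMeasurable ?_
    filter_upwards [ae_restrict_mem measurableSet_Ioi] with s hs
    have hs1 : (1 : ℝ) < s := hs
    have hs0 : (0 : ℝ) < s := by linarith
    rw [Real.norm_eq_abs, abs_mul, abs_of_nonneg (rpow_nonneg hs0.le _),
      abs_of_nonneg (rpow_nonneg (by linarith) _)]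
    calc s ^ a * (1 + s) ^ (-β) ≤ s ^ a * s ^ (-β) :=
          mul_le_mul_of_nonneg_left
            (rpow_le_rpow_of_nonpos hs0 (by linarith) (by linarith)) (rpow_nonneg hs0.le _)
      _ = s ^ (a - β) := by rw [← rpow_add hs0]; ring_nf
  have : Set.Ioi (0 : ℝ) = Set.Ioc 0 1 ∪ Set.Ioi 1 := (Set.Ioc_union_Ioi_eq_Ioi zero_le_one).symm
  rw [this]
  exact hIoc.union hIoi

/-- finiteness of
`∫_{ℝ^d} ∫_0^∞ s^{β-α} (1+s)^{-β} (1+|x|/s)^{-γ} s^{-σ} s^{-(d+1)} ds dx`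
under the conditions `γ > d` and `β > α + σ > 0`. -/
theorem affEnvelope_wiener_integral_finite (d : ℕ) (hd : 1 ≤ d)
    (σ α β γ : ℝ) (hα : 0 ≤ α) (hβ : 0 ≤ β) (hγ : 0 ≤ γ)
    (hγd : (d : ℝ) < γ) (hβ_gt : α + σ < β) (hσ_pos : 0 < α + σ) :
    (∫⁻ x : EuclideanSpace ℝ (Fin d), ∫⁻ s in Set.Ioi (0 : ℝ),
      ENNReal.ofReal
        (s ^ (β - α) * (1 + s) ^ (-β) * (1 + ‖x‖ / s) ^ (-γ) * s ^ (-σ) *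
          s ^ (-((d : ℝ) + 1)))) < ⊤ := by
  have hfinrank : Module.finrank ℝ (EuclideanSpace ℝ (Fin d)) = d := by
    simp [finrank_euclideanSpace]
  -- the Japanese-bracket integral
  set I : ℝ≥0∞ := ∫⁻ y : EuclideanSpace ℝ (Fin d), ENNReal.ofReal ((1 + ‖y‖) ^ (-γ)) with hI
  have hI_lt : I < ⊤ := finite_integral_one_add_norm (by rw [hfinrank]; exact hγd)
  have hg_meas : Measurable fun y : EuclideanSpace ℝ (Fin d) => ENNReal.ofReal ((1 + ‖y‖) ^ (-γ)) := by fun_prop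
  -- measurability of the full integrand
  have hmeas : Measurable fun p : EuclideanSpace ℝ (Fin d) × ℝ =>
      ENNReal.ofReal
        (p.2 ^ (β - α) * (1 + p.2) ^ (-β) * (1 + ‖p.1‖ / p.2) ^ (-γ) * p.2 ^ (-σ) *
          p.2 ^ (-((d : ℝ) + 1))) := by fun_prop
  rw [lintegral_lintegral_swap hmeas.aemeasurable]
  -- compute the inner integral for each s > 0
  have hinner : ∀ s ∈ Set.Ioi (0 : ℝ),
      (∫⁻ x : EuclideanSpace ℝ (Fin d), ENNReal.ofReal
        (s ^ (β - α) * (1 + s) ^ (-β) * (1 + ‖x‖ / s) ^ (-γ) * s ^ (-σ) *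
          s ^ (-((d : ℝ) + 1))))
      = ENNReal.ofReal (s ^ (β - α - σ - 1) * (1 + s) ^ (-β)) * I := by
    intro s hs
    have hs0 : (0 : ℝ) < s := hs
    set c : ℝ := s ^ (β - α) * (1 + s) ^ (-β) * s ^ (-σ) * s ^ (-((d : ℝ) + 1)) with hc
    have hc0 : 0 ≤ c := by positivity
    have step1 : ∀ x : EuclideanSpace ℝ (Fin d),
        ENNReal.ofReal (s ^ (β - α) * (1 + s) ^ (-β) * (1 + ‖x‖ / s) ^ (-γ) * s ^ (-σ) *
          s ^ (-((d : ℝ) + 1)))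
        = ENNReal.ofReal c * ENNReal.ofReal ((1 + ‖x‖ / s) ^ (-γ)) := by
      intro x
      rw [← ENNReal.ofReal_mul hc0]
      congr 1
      ring
    simp_rw [step1]
    rw [lintegral_const_mul _ (by fun_prop)]
    -- scaling in `x`
    have hnorm : ∀ x : EuclideanSpace ℝ (Fin d), ‖x‖ / s = ‖(s⁻¹ : ℝ) • x‖ := by
      intro x
      rw [norm_smul, Real.norm_eq_abs, abs_of_nonneg (inv_nonneg.2 hs0.le)]
      rw [div_eq_inv_mul]
    have hscale : (∫⁻ x : EuclideanSpace ℝ (Fin d), ENNReal.ofReal ((1 + ‖x‖ / s) ^ (-γ)))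
        = ENNReal.ofReal (s ^ (d : ℕ)) * I := by
      calc (∫⁻ x : EuclideanSpace ℝ (Fin d), ENNReal.ofReal ((1 + ‖x‖ / s) ^ (-γ)))
          = ∫⁻ x : EuclideanSpace ℝ (Fin d), ENNReal.ofReal ((1 + ‖(s⁻¹ : ℝ) • x‖) ^ (-γ)) := by
            simp_rw [hnorm]
        _ = ∫⁻ y : EuclideanSpace ℝ (Fin d), ENNReal.ofReal ((1 + ‖y‖) ^ (-γ))
              ∂(Measure.map (fun x : EuclideanSpace ℝ (Fin d) => (s⁻¹ : ℝ) • x) volume) := by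
            rw [lintegral_map hg_meas (measurable_const_smul _)]
        _ = ENNReal.ofReal (s ^ (d : ℕ)) * I := by
            rw [Measure.map_addHaar_smul volume (inv_ne_zero hs0.ne'), lintegral_smul_measure]
            congr 2
            rw [hfinrank, inv_pow]
            rw [inv_inv, abs_of_nonneg (pow_nonneg hs0.le d)]
    rw [hscale, ← mul_assoc, ← ENNReal.ofReal_mul hc0]
    congr 2
    rw [hc]
    rw [← Real.rpow_natCast s d]
    rw [show s ^ (β - α) * (1 + s) ^ (-β) * s ^ (-σ) * s ^ (-((d : ℝ) + 1)) * s ^ (d : ℝ)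
        = (1 + s) ^ (-β) * (s ^ (β - α) * s ^ (-σ) * s ^ (-((d : ℝ) + 1)) * s ^ (d : ℝ)) by ring]
    rw [← Real.rpow_add hs0, ← Real.rpow_add hs0, ← Real.rpow_add hs0]
    rw [show β - α + -σ + -((d : ℝ) + 1) + (d : ℝ) = β - α - σ - 1 by ring]
    ring
  rw [setLIntegral_congr_fun measurableSet_Ioi hinner]
  rw [lintegral_mul_const' _ _ hI_lt.ne]
  refine ENNReal.mul_lt_top ?_ hI_lt
  exact (aux_integrableOn_rpow_mul (β - α - σ - 1) β hβ (by linarith)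
    (by linarith)).setLIntegral_lt_top
end
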